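/- Let T be a tournament on N vertices with a median order v_1,...,v_N, and let a, a', b, ℓ, s, k, Δ⁻ be positive integers with 2a' ≥ a. For every index j with 2ka' < j ≤ N - a + 1 and every set B ⊆ [j, j+a) of size at least b, there exist an index j' with j - 2ka' ≤ j' ≤ j - a' and a set A ⊆ [j', j'+a') such that |A| ≥ (a'/2)·((k-1)/(2k))^ℓ and all but at most 4·((2k)/(k-1))^ℓ·C(a',Δ⁻)·(s/b)^ℓ of the Δ⁻-element subsets S of A satisfy |N⁺(S) ∩ B| ≥ s + 1. -/

import Mathlib

set_option maxHeartbeats 1000000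

open scoped Classical


def rotPerm {N : ℕ} (p : ℕ) (q : Fin N) (hpq : p ≤ q.val) : Equiv.Perm (Fin N) where
  toFun t := if h : p < t.val ∧ t.val ≤ q.val then ⟨t.val - 1, by have := t.isLt; omega⟩
    else if t.val = p then q else t
  invFun t := if h : p ≤ t.val ∧ t.val < q.val then ⟨t.val + 1, by have := q.isLt; omega⟩
    else if t.val = q.val then ⟨p, by have := q.isLt; omega⟩ else t
  left_inv := by
    intro t
    apply Fin.ext
    have hq := q.isLt; have ht := t.isLt
    beta_reduce
    by_cases h1 : p < t.val ∧ t.val ≤ q.val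
    · rw [dif_pos h1]
      by_cases h2 : p ≤ t.val - 1 ∧ t.val - 1 < q.val
      · rw [dif_pos h2]; simp; omega
      · rw [dif_neg h2]
        have h3 : t.val - 1 = q.val := by omega
        simp only [h3, if_pos rfl]
        omega
    · rw [dif_neg h1]
      by_cases h3 : t.val = p
      · rw [if_pos h3]
        have h4 : ¬ (p ≤ q.val ∧ q.val < q.val) := by omega
        rw [dif_neg h4, if_pos rfl]
        simp
        omega
      · rw [if_neg h3]
        have h4 : ¬ (p ≤ t.val ∧ t.val < q.val) := by omega
        rw [dif_neg h4]
        have h5 : t.val ≠ q.val := by omega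
        rw [if_neg h5]
  right_inv := by
    intro t
    apply Fin.ext
    have hq := q.isLt; have ht := t.isLt
    beta_reduce
    by_cases h1 : p ≤ t.val ∧ t.val < q.val
    · rw [dif_pos h1]
      have h2 : p < t.val + 1 ∧ t.val + 1 ≤ q.val := by omega
      rw [dif_pos h2]
      simp
    · rw [dif_neg h1]
      by_cases h3 : t.val = q.val
      · rw [if_pos h3]
        have h4 : p < p → False := by omega
        by_cases h5 : p < p ∧ p ≤ q.val
        · exact absurd h5.1 h4
        · rw [dif_neg h5, if_pos rfl]
          omega
      · rw [if_neg h3]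
        have h4 : ¬ (p < t.val ∧ t.val ≤ q.val) := by omega
        rw [dif_neg h4]
        have h5 : t.val ≠ p := by omega
        rw [if_neg h5]

lemma rotPerm_apply {N : ℕ} (p : ℕ) (q : Fin N) (hpq : p ≤ q.val) (t : Fin N) :
    ((rotPerm p q hpq t : Fin N) : ℕ) =
      if p < t.val ∧ t.val ≤ q.val then t.val - 1 else if t.val = p then q.val else t.val := by
  show ((if h : p < t.val ∧ t.val ≤ q.val then (⟨t.val - 1, _⟩ : Fin N)
    else if t.val = p then q else t) : Fin N).val = _
  split_ifs with h1 h2 <;> simp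


lemma med_count {N : ℕ} (T : Fin N → Fin N → Prop)
    (hmedian : ∀ σ : Equiv.Perm (Fin N),
      (Finset.univ.filter (fun p : Fin N × Fin N => p.1 < p.2 ∧ T (σ p.1) (σ p.2))).card ≤
      (Finset.univ.filter (fun p : Fin N × Fin N => p.1 < p.2 ∧ T p.1 p.2)).card)
    (p : ℕ) (q : Fin N) (hpq : p ≤ q.val) :
    (Finset.univ.filter fun t : Fin N => p ≤ t.val ∧ t.val < q.val ∧ T q t).card ≤
    (Finset.univ.filter fun t : Fin N => p ≤ t.val ∧ t.val < q.val ∧ T t q).card := by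
  classical
  set σ := rotPerm p q hpq with hσdef
  have hval : ∀ t : Fin N, (σ t).val =
      if p < t.val ∧ t.val ≤ q.val then t.val - 1 else if t.val = p then q.val else t.val :=
    rotPerm_apply p q hpq
  have hqlt := q.isLt
  have hpN : p < N := lt_of_le_of_lt hpq hqlt
  have flip : ∀ u v : Fin N, u.val < v.val →
      ((σ v).val < (σ u).val ↔ u.val = p ∧ v.val ≤ q.val) := by
    intro u v huv
    have h1 := hval u
    have h2 := hval v
    split_ifs at h1 h2 <;> omega
  have hσp : σ ⟨p, hpN⟩ = q := by
    apply Fin.ext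
    rw [hval ⟨p, hpN⟩]
    simp only [Fin.val_mk]
    rw [if_neg (by omega)]
    simp
  have hsymm : ∀ t : Fin N, p ≤ t.val → t.val < q.val →
      (σ.symm t).val = t.val + 1 := by
    intro t hpt htq
    have hmk : (σ ⟨t.val + 1, by omega⟩).val = t.val := by
      rw [hval ⟨t.val + 1, by omega⟩]
      simp only [Fin.val_mk]
      rw [if_pos ⟨by omega, by omega⟩]
      omega
    have : σ.symm t = ⟨t.val + 1, by omega⟩ := by
      rw [Equiv.symm_apply_eq]
      exact Fin.ext hmk.symm
    rw [this]
  set U : Finset (Fin N × Fin N) :=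
    Finset.univ.filter (fun pp : Fin N × Fin N => pp.1 < pp.2 ∧ T (σ pp.1) (σ pp.2)) with hU
  set V : Finset (Fin N × Fin N) :=
    Finset.univ.filter (fun pp : Fin N × Fin N => pp.1 < pp.2 ∧ T pp.1 pp.2) with hV
  set V' : Finset (Fin N × Fin N) :=
    Finset.univ.filter (fun pp : Fin N × Fin N => σ pp.1 < σ pp.2 ∧ T (σ pp.1) (σ pp.2)) with hV'
  have hUV : U.card ≤ V.card := hmedian σ
  have hVV' : V.card = V'.card := by
    apply Finset.card_bij' (fun pp _ => (σ.symm pp.1, σ.symm pp.2)) (fun pp _ => (σ pp.1, σ pp.2))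
    · intro pp hpp
      simp only [hV, Finset.mem_filter, Finset.mem_univ, true_and] at hpp
      simp only [hV', Finset.mem_filter, Finset.mem_univ, true_and, Equiv.apply_symm_apply]
      exact hpp
    · intro pp hpp
      simp only [hV', Finset.mem_filter, Finset.mem_univ, true_and] at hpp
      simp only [hV, Finset.mem_filter, Finset.mem_univ, true_and]
      exact hpp
    · intro pp hpp; simp
    · intro pp hpp; simp
  have hUsplit : (U.filter fun pp => σ pp.1 < σ pp.2).card +
      (U.filter fun pp => ¬ σ pp.1 < σ pp.2).card = U.card :=
    Finset.card_filter_add_card_filter_not _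
  have hV'split : (V'.filter fun pp => pp.1 < pp.2).card +
      (V'.filter fun pp => ¬ pp.1 < pp.2).card = V'.card :=
    Finset.card_filter_add_card_filter_not _
  have hcommon : (U.filter fun pp => σ pp.1 < σ pp.2) = (V'.filter fun pp => pp.1 < pp.2) := by
    ext pp
    simp only [hU, hV', Finset.mem_filter, Finset.mem_univ, true_and]
    tauto
  have hcc := congrArg Finset.card hcommon
  have hkey : (U.filter fun pp => ¬ σ pp.1 < σ pp.2).card ≤
      (V'.filter fun pp => ¬ pp.1 < pp.2).card := by
    rw [hVV'] at hUV
    omega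
  have hleft : (U.filter fun pp => ¬ σ pp.1 < σ pp.2).card =
      (Finset.univ.filter fun t : Fin N => p ≤ t.val ∧ t.val < q.val ∧ T q t).card := by
    apply Finset.card_bij' (fun pp _ => σ pp.2)
      (fun t _ => ((⟨p, hpN⟩ : Fin N), σ.symm t))
    · intro pp hpp
      simp only [hU, Finset.mem_filter, Finset.mem_univ, true_and] at hpp
      obtain ⟨⟨h12, hT⟩, hnlt⟩ := hpp
      have h12' : pp.1.val < pp.2.val := h12
      have hflip : pp.1.val = p ∧ pp.2.val ≤ q.val := by
        rw [← flip pp.1 pp.2 h12']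
        rcases lt_or_eq_of_le (not_lt.mp hnlt : σ pp.2 ≤ σ pp.1) with h | h
        · exact h
        · exact absurd (σ.injective h) (by intro hh; rw [hh] at h12'; omega)
      have hσ1 : σ pp.1 = q := by
        have : pp.1 = (⟨p, hpN⟩ : Fin N) := Fin.ext hflip.1
        rw [this, hσp]
      have hσ2 : (σ pp.2).val = pp.2.val - 1 := by
        rw [hval pp.2, if_pos ⟨by omega, hflip.2⟩]
      simp only [Finset.mem_filter, Finset.mem_univ, true_and]
      refine ⟨by omega, by omega, ?_⟩
      rw [← hσ1]; exact hT
    · intro t ht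
      simp only [Finset.mem_filter, Finset.mem_univ, true_and] at ht
      obtain ⟨hpt, htq, hTt⟩ := ht
      have hst := hsymm t hpt htq
      simp only [hU, Finset.mem_filter, Finset.mem_univ, true_and]
      refine ⟨⟨?_, ?_⟩, ?_⟩
      · show (⟨p, hpN⟩ : Fin N) < σ.symm t
        rw [Fin.lt_def]
        simp only [Fin.val_mk]
        omega
      · rw [hσp, Equiv.apply_symm_apply]; exact hTt
      · rw [hσp, Equiv.apply_symm_apply]
        intro hc
        rw [Fin.lt_def] at hc
        omega
    · intro pp hpp
      simp only [hU, Finset.mem_filter, Finset.mem_univ, true_and] at hpp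
      obtain ⟨⟨h12, hT⟩, hnlt⟩ := hpp
      have h12' : pp.1.val < pp.2.val := h12
      have hflip : pp.1.val = p ∧ pp.2.val ≤ q.val := by
        rw [← flip pp.1 pp.2 h12']
        rcases lt_or_eq_of_le (not_lt.mp hnlt : σ pp.2 ≤ σ pp.1) with h | h
        · exact h
        · exact absurd (σ.injective h) (by intro hh; rw [hh] at h12'; omega)
      have h1 : (⟨p, hpN⟩ : Fin N) = pp.1 := Fin.ext hflip.1.symm
      rw [Equiv.symm_apply_apply, h1]
    · intro t _
      rw [Equiv.apply_symm_apply]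
  have hright : (V'.filter fun pp => ¬ pp.1 < pp.2).card =
      (Finset.univ.filter fun t : Fin N => p ≤ t.val ∧ t.val < q.val ∧ T t q).card := by
    apply Finset.card_bij' (fun pp _ => σ pp.1)
      (fun t _ => (σ.symm t, (⟨p, hpN⟩ : Fin N)))
    · intro pp hpp
      simp only [hV', Finset.mem_filter, Finset.mem_univ, true_and] at hpp
      obtain ⟨⟨hσlt, hT⟩, hnlt⟩ := hpp
      have h21 : pp.2.val < pp.1.val := by
        rcases lt_or_eq_of_le (not_lt.mp hnlt : pp.2 ≤ pp.1) with h | h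
        · exact h
        · exfalso; rw [h] at hσlt; exact lt_irrefl _ hσlt
      have hflip : pp.2.val = p ∧ pp.1.val ≤ q.val := (flip pp.2 pp.1 h21).mp hσlt
      have hσ2 : σ pp.2 = q := by
        have : pp.2 = (⟨p, hpN⟩ : Fin N) := Fin.ext hflip.1
        rw [this, hσp]
      have hσ1 : (σ pp.1).val = pp.1.val - 1 := by
        rw [hval pp.1, if_pos ⟨by omega, hflip.2⟩]
      simp only [Finset.mem_filter, Finset.mem_univ, true_and]
      refine ⟨by omega, by omega, ?_⟩
      rw [← hσ2]; exact hT
    · intro t ht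
      simp only [Finset.mem_filter, Finset.mem_univ, true_and] at ht
      obtain ⟨hpt, htq, hTt⟩ := ht
      have hst := hsymm t hpt htq
      simp only [hV', Finset.mem_filter, Finset.mem_univ, true_and]
      refine ⟨⟨?_, ?_⟩, ?_⟩
      · rw [Equiv.apply_symm_apply, hσp]
        rw [Fin.lt_def]
        omega
      · rw [Equiv.apply_symm_apply, hσp]; exact hTt
      · intro hc
        rw [Fin.lt_def] at hc
        simp only [Fin.val_mk] at hc
        omega
    · intro pp hpp
      simp only [hV', Finset.mem_filter, Finset.mem_univ, true_and] at hpp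
      obtain ⟨⟨hσlt, hT⟩, hnlt⟩ := hpp
      have h21 : pp.2.val < pp.1.val := by
        rcases lt_or_eq_of_le (not_lt.mp hnlt : pp.2 ≤ pp.1) with h | h
        · exact h
        · exfalso; rw [h] at hσlt; exact lt_irrefl _ hσlt
      have hflip : pp.2.val = p ∧ pp.1.val ≤ q.val := (flip pp.2 pp.1 h21).mp hσlt
      have h1 : (⟨p, hpN⟩ : Fin N) = pp.2 := Fin.ext hflip.1.symm
      rw [Equiv.symm_apply_apply, h1]
    · intro t _
      rw [Equiv.apply_symm_apply]
  omega


lemma card_interval {N : ℕ} (x y : ℕ) (hy : y ≤ N) :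
    (Finset.univ.filter fun v : Fin N => x ≤ v.val ∧ v.val < y).card = y - x := by
  have h : ∀ m ∈ Finset.Ico x y, m < N := fun m hm => by
    rw [Finset.mem_Ico] at hm; omega
  have he : (Finset.univ.filter fun v : Fin N => x ≤ v.val ∧ v.val < y) =
      (Finset.Ico x y).attachFin h := by
    ext v; simp [Finset.mem_attachFin, Finset.mem_Ico]
  rw [he, Finset.card_attachFin, Nat.card_Ico]

lemma exists_ge_avg {α β : Type*} (s : Finset α) (t : Finset β) (hs : s.Nonempty)
    (ht : t.Nonempty) (g : α → β → ℝ) (c : ℝ)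
    (h : (s.card : ℝ) * t.card * c ≤ ∑ x ∈ s, ∑ y ∈ t, g x y) :
    ∃ x ∈ s, ∃ y ∈ t, c ≤ g x y := by
  by_contra hcon
  push_neg at hcon
  have hlt : ∑ x ∈ s, ∑ y ∈ t, g x y < ∑ x ∈ s, (t.card : ℝ) * c := by
    apply Finset.sum_lt_sum_of_nonempty hs
    intro x hx
    calc ∑ y ∈ t, g x y < ∑ y ∈ t, c :=
          Finset.sum_lt_sum_of_nonempty ht (fun y hy => hcon x hx y hy)
      _ = (t.card : ℝ) * c := by rw [Finset.sum_const, nsmul_eq_mul]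
  rw [Finset.sum_const, nsmul_eq_mul] at hlt
  nlinarith [h, hlt]

-- counting functions into piFinset
lemma count_pi {N ℓ : ℕ} (B : Finset (Fin N)) (P : Fin N → Prop) :
    ((Fintype.piFinset fun _ : Fin ℓ => B).filter fun f => ∀ i, P (f i)).card
      = ((B.filter fun y => P y).card) ^ ℓ := by
  classical
  have he : ((Fintype.piFinset fun _ : Fin ℓ => B).filter fun f => ∀ i, P (f i))
      = Fintype.piFinset fun _ : Fin ℓ => (B.filter fun y => P y) := by
    ext f
    simp only [Finset.mem_filter, Fintype.mem_piFinset]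
    exact ⟨fun h i => ⟨h.1 i, h.2 i⟩, fun h => ⟨fun i => (h i).1, fun i => (h i).2⟩⟩
  rw [he, Fintype.card_piFinset]
  simp

/-- Dependent random choice along a median order: given a tournament with a median order,
parameters `a, a', b, ℓ, s, k, Δ⁻` with `2a' ≥ a`, an index `j` with `2ka' ≤ j`, `j + a ≤ N`,
and a set `B ⊆ [j, j+a)` of size at least `b`, there are an index `j'` with
`j - 2ka' ≤ j' ≤ j - a'` and a set `A ⊆ [j', j'+a')` such that
`|A| ≥ (a'/2)·((k-1)/(2k))^ℓ` and all but at most `4·((2k)/(k-1))^ℓ·C(a',Δ⁻)·(s/b)^ℓ`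
of the `Δ⁻`-subsets `S ⊆ A` satisfy `|N⁺(S) ∩ B| ≥ s + 1`. -/
theorem dependent_random_choice_median (N a a' b ℓ s k Δminus : ℕ)
    (ha : 0 < a) (ha' : 0 < a') (hb : 0 < b) (hℓ : 0 < ℓ) (hs : 0 < s) (hk : 0 < k)
    (hΔ : 0 < Δminus) (haa' : a ≤ 2 * a')
    (T : Fin N → Fin N → Prop)
    (hirr : ∀ i, ¬ T i i)
    (htour : ∀ i j : Fin N, i ≠ j → (T i j ↔ ¬ T j i))
    (hmedian : ∀ σ : Equiv.Perm (Fin N),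
      (Finset.univ.filter (fun p : Fin N × Fin N => p.1 < p.2 ∧ T (σ p.1) (σ p.2))).card ≤
      (Finset.univ.filter (fun p : Fin N × Fin N => p.1 < p.2 ∧ T p.1 p.2)).card)
    (j : ℕ) (hj₁ : 2 * k * a' ≤ j) (hj₂ : j + a ≤ N)
    (B : Finset (Fin N)) (hB : ∀ x ∈ B, j ≤ (x : ℕ) ∧ (x : ℕ) < j + a) (hBcard : b ≤ B.card) :
    ∃ j' : ℕ, j - 2 * k * a' ≤ j' ∧ j' ≤ j - a' ∧
      ∃ A : Finset (Fin N),
        (∀ x ∈ A, j' ≤ (x : ℕ) ∧ (x : ℕ) < j' + a') ∧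
        ((a' : ℝ) / 2 * (((k : ℝ) - 1) / (2 * k)) ^ ℓ ≤ A.card) ∧
        (((A.powersetCard Δminus).filter
            (fun S => (B.filter (fun y => ∀ x ∈ S, T x y)).card < s + 1)).card : ℝ) ≤
          4 * ((2 * (k : ℝ)) / ((k : ℝ) - 1)) ^ ℓ * (a'.choose Δminus) * ((s : ℝ) / b) ^ ℓ := by
  classical
  by_cases hk1 : k = 1
  · -- degenerate case k = 1 : both bounds are 0
    subst hk1
    refine ⟨j - a', by omega, le_refl _, ∅, by simp, ?_, ?_⟩
    · simp only [Finset.card_empty, Nat.cast_zero, Nat.cast_one]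
      rw [show ((1:ℝ) - 1) / (2 * 1) = 0 by norm_num, zero_pow (by omega : ℓ ≠ 0)]
      norm_num
    · have h1 : (Finset.powersetCard Δminus (∅ : Finset (Fin N))) = ∅ :=
        Finset.powersetCard_eq_empty.mpr (by simp; omega)
      rw [h1]
      simp only [Finset.filter_empty, Finset.card_empty, Nat.cast_zero, Nat.cast_one]
      rw [show (2 * (1:ℝ)) / (1 - 1) = 0 by norm_num, zero_pow (by omega : ℓ ≠ 0)]
      norm_num
  -- main case k ≥ 2
  have hk2 : 2 ≤ k := by omega
  have hkR : (2:ℝ) ≤ (k:ℝ) := by exact_mod_cast hk2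
  set θ : ℝ := ((k:ℝ) - 1) / (2 * (k:ℝ)) with hθdef
  have hθpos : 0 < θ := by
    apply div_pos <;> linarith
  have hθℓpos : 0 < θ ^ ℓ := pow_pos hθpos ℓ
  have hjN : j ≤ N := by omega
  set p : ℕ := j - 2 * k * a' with hpdef
  have hpj : p + 2 * k * a' = j := by omega
  -- windows
  set W : ℕ → Finset (Fin N) :=
    fun i => Finset.univ.filter fun v : Fin N => p + i * a' ≤ v.val ∧ v.val < p + i * a' + a'
    with hWdef
  have hWsub : ∀ i, i < 2 * k → p + i * a' + a' ≤ j := by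
    intro i hi
    have h1 : (i + 1) * a' ≤ 2 * k * a' := Nat.mul_le_mul_right _ (by omega)
    rw [add_one_mul] at h1
    omega
  have hWcard : ∀ i, i < 2 * k → (W i).card = a' := by
    intro i hi
    rw [hWdef, card_interval _ _ (by have := hWsub i hi; omega)]
    omega
  -- big interval
  set I : Finset (Fin N) := Finset.univ.filter fun v : Fin N => p ≤ v.val ∧ v.val < j with hIdef
  have hIcard : I.card = 2 * k * a' := by
    rw [hIdef, card_interval _ _ hjN]; omega
  have hIU : I = (Finset.range (2 * k)).biUnion W := by
    ext v
    simp only [hIdef, hWdef, Finset.mem_filter, Finset.mem_univ, true_and,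
      Finset.mem_biUnion, Finset.mem_range]
    constructor
    · rintro ⟨h1, h2⟩
      set m : ℕ := v.val - p with hm
      have e1 : a' * (m / a') + m % a' = m := Nat.div_add_mod m a'
      have e2 : m % a' < a' := Nat.mod_lt _ ha'
      have e3 : (m / a') * a' = a' * (m / a') := mul_comm _ _
      refine ⟨m / a', ?_, by omega, by omega⟩
      rw [Nat.div_lt_iff_lt_mul ha']
      have : 2 * k * a' = 2 * k * a' := rfl
      calc m < 2 * k * a' := by omega
        _ = 2 * k * a' := rfl
    · rintro ⟨i, hi, h1, h2⟩
      have := hWsub i hi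
      constructor <;> omega
  have hdisj : (↑(Finset.range (2 * k)) : Set ℕ).PairwiseDisjoint W := by
    have aux : ∀ i i' : ℕ, i < i' → Disjoint (W i) (W i') := by
      intro i i' hii
      rw [Finset.disjoint_left]
      intro v hv hv'
      simp only [hWdef, Finset.mem_filter, Finset.mem_univ, true_and] at hv hv'
      have h1 : (i + 1) * a' ≤ i' * a' := Nat.mul_le_mul_right _ (by omega)
      rw [add_one_mul] at h1
      omega
    intro i _ i' _ hne
    rcases lt_or_gt_of_ne hne with h | h
    · exact aux i i' h
    · exact (aux i' i h).symm
  have hsumI : ∀ g : Fin N → ℝ,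
      ∑ v ∈ I, g v = ∑ i ∈ Finset.range (2 * k), ∑ v ∈ W i, g v := by
    intro g
    rw [hIU]
    exact Finset.sum_biUnion hdisj
  -- degrees
  set d : Fin N → ℕ := fun v => (B.filter fun y => T v y).card with hddef
  have hdeg : ∀ y ∈ B, k * a' ≤ a' + (I.filter fun v => T v y).card := by
    intro y hy
    obtain ⟨hyj, hyja⟩ := hB y hy
    have hpq : p ≤ y.val := by omega
    have hmc := med_count T hmedian p y hpq
    set Sin := Finset.univ.filter fun t : Fin N => p ≤ t.val ∧ t.val < y.val ∧ T t y with hSin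
    set Sout := Finset.univ.filter fun t : Fin N => p ≤ t.val ∧ t.val < y.val ∧ T y t with hSout
    have hyN : y.val ≤ N := le_of_lt y.isLt
    have hsplit := Finset.card_filter_add_card_filter_not
      (s := Finset.univ.filter fun t : Fin N => p ≤ t.val ∧ t.val < y.val)
      (p := fun t => T t y)
    have e1 : ((Finset.univ.filter fun t : Fin N => p ≤ t.val ∧ t.val < y.val).filter
        fun t => T t y) = Sin := by
      rw [hSin, Finset.filter_filter]
      apply Finset.filter_congr
      intro t _; tauto
    have e2 : ((Finset.univ.filter fun t : Fin N => p ≤ t.val ∧ t.val < y.val).filter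
        fun t => ¬ T t y) = Sout := by
      rw [hSout, Finset.filter_filter]
      apply Finset.filter_congr
      intro t _
      constructor
      · rintro ⟨⟨h1, h2⟩, h3⟩
        refine ⟨h1, h2, ?_⟩
        have hne : y ≠ t := by
          intro he; rw [he] at h2; omega
        exact (htour y t hne).mpr h3
      · rintro ⟨h1, h2, h3⟩
        refine ⟨⟨h1, h2⟩, ?_⟩
        have hne : y ≠ t := by
          intro he; rw [he] at h2; omega
        intro hc
        exact ((htour y t hne).mp h3) hc
    rw [e1, e2, card_interval _ _ hyN] at hsplit
    -- Sin ⊆ (I.filter (T · y)) ∪ [j, y)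
    have hsub : Sin ⊆ (I.filter fun v => T v y) ∪
        (Finset.univ.filter fun t : Fin N => j ≤ t.val ∧ t.val < y.val) := by
      intro t ht
      simp only [hSin, Finset.mem_filter, Finset.mem_univ, true_and] at ht
      obtain ⟨h1, h2, h3⟩ := ht
      rw [Finset.mem_union]
      by_cases hc : t.val < j
      · left
        simp only [hIdef, Finset.mem_filter, Finset.mem_univ, true_and]
        exact ⟨⟨h1, hc⟩, h3⟩
      · right
        simp only [Finset.mem_filter, Finset.mem_univ, true_and]
        omega
    have hcu := (Finset.card_le_card hsub).trans (Finset.card_union_le _ _)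
    rw [card_interval _ _ hyN] at hcu
    have hmul : 2 * (k * a') = 2 * k * a' := by ring
    omega
  have hdouble : ∑ v ∈ I, d v = ∑ y ∈ B, (I.filter fun v => T v y).card := by
    simp only [hddef, Finset.card_filter]
    exact Finset.sum_comm
  have hdegsum : B.card * (k * a') ≤ B.card * a' + ∑ v ∈ I, d v := by
    rw [hdouble]
    calc B.card * (k * a') = ∑ _y ∈ B, k * a' := by rw [Finset.sum_const, smul_eq_mul]
      _ ≤ ∑ y ∈ B, (a' + (I.filter fun v => T v y).card) := Finset.sum_le_sum hdeg
      _ = B.card * a' + ∑ y ∈ B, (I.filter fun v => T v y).card := by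
          rw [Finset.sum_add_distrib, Finset.sum_const, smul_eq_mul]
  -- Jensen
  have hBc : (0:ℝ) < (B.card : ℝ) := by
    have : 0 < B.card := by omega
    exact_mod_cast this
  have hK2 : (0:ℝ) < 2 * (k:ℝ) * (a':ℝ) := by positivity
  have hSD : (B.card : ℝ) * ((k:ℝ) - 1) * (a':ℝ) ≤ ∑ v ∈ I, (d v : ℝ) := by
    have h := hdegsum
    have h' : (B.card * (k * a') : ℝ) ≤ (B.card * a' : ℝ) + ∑ v ∈ I, (d v : ℝ) := by
      exact_mod_cast h
    nlinarith [h']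
  have hSP : 2 * (k:ℝ) * (a':ℝ) * θ ^ ℓ * (B.card : ℝ) ^ ℓ ≤ ∑ v ∈ I, (d v : ℝ) ^ ℓ := by
    have hjen := pow_sum_div_card_le_sum_pow (s := I) (f := fun v => (d v : ℝ))
      (fun i _ => by positivity) (ℓ - 1)
    rw [show ℓ - 1 + 1 = ℓ by omega] at hjen
    have hIcR : (I.card : ℝ) = 2 * (k:ℝ) * (a':ℝ) := by
      rw [hIcard]; push_cast; ring
    rw [hIcR] at hjen
    have hnn : (0:ℝ) ≤ (B.card : ℝ) * ((k:ℝ) - 1) * (a':ℝ) := by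
      have h1 : (0:ℝ) ≤ (k:ℝ) - 1 := by linarith
      have h2 : (0:ℝ) ≤ (B.card:ℝ) := hBc.le
      have h3 : (0:ℝ) ≤ (a':ℝ) := by positivity
      exact mul_nonneg (mul_nonneg h2 h1) h3
    have hp3 : ((B.card : ℝ) * ((k:ℝ) - 1) * (a':ℝ)) ^ ℓ ≤ (∑ v ∈ I, (d v : ℝ)) ^ ℓ :=
      pow_le_pow_left₀ hnn hSD ℓ
    have hk0 : (2 * (k:ℝ)) ≠ 0 := by positivity
    have hfac : (B.card : ℝ) * ((k:ℝ) - 1) * (a':ℝ) = θ * (2 * (k:ℝ) * (a':ℝ)) * (B.card:ℝ) := by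
      rw [hθdef]
      field_simp
    have hexp : ((B.card : ℝ) * ((k:ℝ) - 1) * (a':ℝ)) ^ ℓ =
        θ ^ ℓ * (2 * (k:ℝ) * (a':ℝ)) ^ ℓ * (B.card:ℝ) ^ ℓ := by
      rw [hfac, mul_pow, mul_pow]
    have hpow : (2 * (k:ℝ) * (a':ℝ)) ^ ℓ =
        (2 * (k:ℝ) * (a':ℝ)) ^ (ℓ - 1) * (2 * (k:ℝ) * (a':ℝ)) := by
      rw [← pow_succ, show ℓ - 1 + 1 = ℓ by omega]
    have hKpos : (0:ℝ) < (2 * (k:ℝ) * (a':ℝ)) ^ (ℓ - 1) := by positivity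
    calc 2 * (k:ℝ) * (a':ℝ) * θ ^ ℓ * (B.card : ℝ) ^ ℓ
        = ((B.card : ℝ) * ((k:ℝ) - 1) * (a':ℝ)) ^ ℓ / (2 * (k:ℝ) * (a':ℝ)) ^ (ℓ - 1) := by
          rw [hexp, hpow]
          field_simp
      _ ≤ (∑ v ∈ I, (d v : ℝ)) ^ ℓ / (2 * (k:ℝ) * (a':ℝ)) ^ (ℓ - 1) := by
          exact (div_le_div_iff_of_pos_right hKpos).mpr hp3
      _ ≤ ∑ v ∈ I, (d v : ℝ) ^ ℓ := hjen
  -- random functions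
  set piF : Finset (Fin ℓ → Fin N) := Fintype.piFinset fun _ : Fin ℓ => B with hpiFdef
  have hpiFcard : piF.card = B.card ^ ℓ := by
    rw [hpiFdef, Fintype.card_piFinset]
    simp
  have hBne : B.Nonempty := Finset.card_pos.mp (by omega)
  obtain ⟨y0, hy0⟩ := hBne
  have hpiFne : piF.Nonempty :=
    ⟨fun _ => y0, by rw [hpiFdef, Fintype.mem_piFinset]; exact fun _ => hy0⟩
  set A : (Fin ℓ → Fin N) → ℕ → Finset (Fin N) :=
    fun f i => (W i).filter fun v => ∀ t, T v (f t) with hAdef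
  have hAsum : ∀ i : ℕ, ∑ f ∈ piF, (A f i).card = ∑ v ∈ W i, (d v) ^ ℓ := by
    intro i
    simp only [hAdef, Finset.card_filter]
    rw [Finset.sum_comm]
    apply Finset.sum_congr rfl
    intro v _
    rw [← Finset.card_filter]
    exact count_pi B (fun y => T v y)
  have hAS : 2 * (k:ℝ) * (a':ℝ) * θ ^ ℓ * (B.card : ℝ) ^ ℓ ≤
      ∑ f ∈ piF, ∑ i ∈ Finset.range (2 * k), ((A f i).card : ℝ) := by
    rw [Finset.sum_comm]
    have e : ∀ i ∈ Finset.range (2 * k),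
        ∑ f ∈ piF, ((A f i).card : ℝ) = ∑ v ∈ W i, (d v : ℝ) ^ ℓ := by
      intro i _
      have h1 : ((∑ f ∈ piF, (A f i).card : ℕ) : ℝ) = ((∑ v ∈ W i, d v ^ ℓ : ℕ) : ℝ) := by
        exact_mod_cast congrArg (fun n : ℕ => (n:ℝ)) (hAsum i)
      push_cast at h1
      exact h1
    rw [Finset.sum_congr rfl e, ← hsumI]
    exact hSP
  set badP : Finset (Fin N) → Prop :=
    fun S => (B.filter fun y => ∀ x ∈ S, T x y).card < s + 1 with hbadPdef
  set Bad : (Fin ℓ → Fin N) → ℕ → ℕ :=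
    fun f i => (((A f i).powersetCard Δminus).filter badP).card with hBaddef
  have hbadsum : ∀ i, i < 2 * k → ∑ f ∈ piF, Bad f i ≤ a'.choose Δminus * s ^ ℓ := by
    intro i hi
    have hstep : ∀ f : Fin ℓ → Fin N, Bad f i =
        ∑ S ∈ ((W i).powersetCard Δminus).filter badP,
          (if ∀ t, ∀ v ∈ S, T v (f t) then 1 else 0) := by
      intro f
      show (((A f i).powersetCard Δminus).filter badP).card = _
      rw [← Finset.card_filter]
      congr 1
      ext S
      simp only [Finset.mem_filter, Finset.mem_powersetCard, hAdef]
      constructor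
      · rintro ⟨⟨hsub, hcard⟩, hbad⟩
        have h1 : S ⊆ W i := hsub.trans (Finset.filter_subset _ _)
        exact ⟨⟨⟨h1, hcard⟩, hbad⟩, fun t v hv => (Finset.mem_filter.mp (hsub hv)).2 t⟩
      · rintro ⟨⟨⟨hsub, hcard⟩, hbad⟩, hall⟩
        exact ⟨⟨fun v hv => Finset.mem_filter.mpr ⟨hsub hv, fun t => hall t v hv⟩, hcard⟩, hbad⟩
    calc ∑ f ∈ piF, Bad f i
        = ∑ f ∈ piF, ∑ S ∈ ((W i).powersetCard Δminus).filter badP,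
            (if ∀ t, ∀ v ∈ S, T v (f t) then 1 else 0) :=
          Finset.sum_congr rfl fun f _ => hstep f
      _ = ∑ S ∈ ((W i).powersetCard Δminus).filter badP,
            ∑ f ∈ piF, (if ∀ t, ∀ v ∈ S, T v (f t) then 1 else 0) := Finset.sum_comm
      _ ≤ ∑ _S ∈ ((W i).powersetCard Δminus).filter badP, s ^ ℓ := by
          apply Finset.sum_le_sum
          intro S hS
          rw [← Finset.card_filter]
          have hset : (piF.filter fun f => ∀ t : Fin ℓ, ∀ v ∈ S, T v (f t))
              = Fintype.piFinset (fun _ : Fin ℓ => B.filter fun y => ∀ v ∈ S, T v y) := by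
            ext f
            simp only [Finset.mem_filter, Fintype.mem_piFinset, hpiFdef]
            exact ⟨fun h t => ⟨h.1 t, h.2 t⟩, fun h => ⟨fun t => (h t).1, fun t => (h t).2⟩⟩
          rw [hset, Fintype.card_piFinset]
          simp only [Finset.prod_const, Finset.card_univ, Fintype.card_fin]
          apply Nat.pow_le_pow_left
          have hSbad := (Finset.mem_filter.mp hS).2
          rw [hbadPdef] at hSbad
          omega
      _ = (((W i).powersetCard Δminus).filter badP).card * s ^ ℓ := by
          rw [Finset.sum_const, smul_eq_mul]
      _ ≤ a'.choose Δminus * s ^ ℓ := by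
          apply Nat.mul_le_mul_right
          calc (((W i).powersetCard Δminus).filter badP).card
              ≤ ((W i).powersetCard Δminus).card := Finset.card_filter_le _ _
            _ = a'.choose Δminus := by rw [Finset.card_powersetCard, hWcard i hi]
  have hrangene : (Finset.range (2 * k)).Nonempty := ⟨0, Finset.mem_range.mpr (by omega)⟩
  have ha'R : (0:ℝ) < (a':ℝ) := by exact_mod_cast ha'
  have hjle : ∀ i : ℕ, i < 2 * k → p + i * a' ≤ j - a' := by
    intro i hi
    have h1 : (i + 1) * a' ≤ 2 * k * a' := Nat.mul_le_mul_right _ (by omega)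
    rw [add_one_mul] at h1
    omega
  have hmemA : ∀ (f : Fin ℓ → Fin N) (i : ℕ), ∀ x ∈ A f i,
      p + i * a' ≤ (x:ℕ) ∧ (x:ℕ) < p + i * a' + a' := by
    intro f i x hx
    have hx' : x ∈ W i := Finset.filter_subset _ _ hx
    simp only [hWdef, Finset.mem_filter, Finset.mem_univ, true_and] at hx'
    exact hx'
  by_cases hDz : a' < Δminus
  · -- choose piece: no Δminus-subsets at all
    have havg : (piF.card : ℝ) * ((Finset.range (2*k)).card : ℝ) * ((a':ℝ) * θ ^ ℓ) ≤
        ∑ f ∈ piF, ∑ i ∈ Finset.range (2 * k), ((A f i).card : ℝ) := by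
      have he : (piF.card : ℝ) * ((Finset.range (2*k)).card : ℝ) * ((a':ℝ) * θ ^ ℓ)
          = 2 * (k:ℝ) * (a':ℝ) * θ ^ ℓ * (B.card : ℝ) ^ ℓ := by
        rw [hpiFcard, Finset.card_range]
        push_cast
        ring
      rw [he]
      exact hAS
    obtain ⟨f, hf, i, hi, hge⟩ := exists_ge_avg _ _ hpiFne hrangene _ _ havg
    have hi' := Finset.mem_range.mp hi
    refine ⟨p + i * a', by omega, hjle i hi', A f i, hmemA f i, ?_, ?_⟩
    · nlinarith [hge, hθℓpos, ha'R]
    · have hAcard : (A f i).card ≤ a' :=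
        le_trans (Finset.card_filter_le _ _) (le_of_eq (hWcard i hi'))
      have hemp : (A f i).powersetCard Δminus = ∅ :=
        Finset.powersetCard_eq_empty.mpr (by omega)
      rw [hemp, Finset.filter_empty, Finset.card_empty, Nat.choose_eq_zero_of_lt hDz]
      norm_num
  · -- main case
    have hD : Δminus ≤ a' := by omega
    have hDpos : 0 < a'.choose Δminus := Nat.choose_pos hD
    set Dr : ℝ := (a'.choose Δminus : ℝ) with hDrdef
    have hDrpos : 0 < Dr := by rw [hDrdef]; exact_mod_cast hDpos
    have hsR : (0:ℝ) < (s:ℝ) := by exact_mod_cast hs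
    have hbR : (0:ℝ) < (b:ℝ) := by exact_mod_cast hb
    have hsrpos : (0:ℝ) < (s:ℝ)^ℓ := pow_pos hsR ℓ
    have hbrpos : (0:ℝ) < (b:ℝ)^ℓ := pow_pos hbR ℓ
    have havg : (piF.card : ℝ) * ((Finset.range (2*k)).card : ℝ) *
        (2 * Dr * (s:ℝ)^ℓ * ((a':ℝ) * θ ^ ℓ)) ≤
        ∑ f ∈ piF, ∑ i ∈ Finset.range (2 * k),
          (4 * Dr * (s:ℝ)^ℓ * ((A f i).card : ℝ)
            - (a':ℝ) * θ ^ ℓ * (b:ℝ)^ℓ * (Bad f i : ℝ)) := by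
      have hsplit : ∑ f ∈ piF, ∑ i ∈ Finset.range (2 * k),
          (4 * Dr * (s:ℝ)^ℓ * ((A f i).card : ℝ)
            - (a':ℝ) * θ ^ ℓ * (b:ℝ)^ℓ * (Bad f i : ℝ))
          = 4 * Dr * (s:ℝ)^ℓ * (∑ f ∈ piF, ∑ i ∈ Finset.range (2 * k), ((A f i).card : ℝ))
            - (a':ℝ) * θ ^ ℓ * (b:ℝ)^ℓ *
              (∑ f ∈ piF, ∑ i ∈ Finset.range (2 * k), (Bad f i : ℝ)) := by
        rw [Finset.mul_sum, Finset.mul_sum, ← Finset.sum_sub_distrib]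
        apply Finset.sum_congr rfl
        intro f _
        rw [Finset.mul_sum, Finset.mul_sum, ← Finset.sum_sub_distrib]
      have hBadTot : ∑ f ∈ piF, ∑ i ∈ Finset.range (2 * k), (Bad f i : ℝ)
          ≤ 2 * (k:ℝ) * Dr * (s:ℝ)^ℓ := by
        rw [Finset.sum_comm]
        calc ∑ i ∈ Finset.range (2 * k), ∑ f ∈ piF, (Bad f i : ℝ)
            ≤ ∑ _i ∈ Finset.range (2 * k), ((a'.choose Δminus * s ^ ℓ : ℕ) : ℝ) := by
              apply Finset.sum_le_sum
              intro i hi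
              have h2 := hbadsum i (Finset.mem_range.mp hi)
              calc ∑ f ∈ piF, (Bad f i : ℝ)
                  = ((∑ f ∈ piF, Bad f i : ℕ) : ℝ) := by push_cast; rfl
                _ ≤ _ := by exact_mod_cast h2
          _ = 2 * (k:ℝ) * Dr * (s:ℝ)^ℓ := by
              rw [Finset.sum_const, Finset.card_range, nsmul_eq_mul]
              rw [hDrdef]
              push_cast
              ring
      rw [hsplit, hpiFcard, Finset.card_range]
      have hb2 : ((b:ℝ))^ℓ ≤ ((B.card:ℝ))^ℓ :=
        pow_le_pow_left₀ hbR.le (by exact_mod_cast hBcard) ℓ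
      have h1 : 4 * Dr * (s:ℝ)^ℓ * (2 * (k:ℝ) * (a':ℝ) * θ ^ ℓ * (B.card : ℝ) ^ ℓ)
          ≤ 4 * Dr * (s:ℝ)^ℓ * (∑ f ∈ piF, ∑ i ∈ Finset.range (2 * k), ((A f i).card : ℝ)) :=
        mul_le_mul_of_nonneg_left hAS
          (mul_nonneg (mul_nonneg (by norm_num) hDrpos.le) hsrpos.le)
      have h2 : (a':ℝ) * θ ^ ℓ * (b:ℝ)^ℓ *
            (∑ f ∈ piF, ∑ i ∈ Finset.range (2 * k), (Bad f i : ℝ))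
          ≤ (a':ℝ) * θ ^ ℓ * (b:ℝ)^ℓ * (2 * (k:ℝ) * Dr * (s:ℝ)^ℓ) :=
        mul_le_mul_of_nonneg_left hBadTot
          (mul_nonneg (mul_nonneg ha'R.le hθℓpos.le) hbrpos.le)
      have h3 : (a':ℝ) * θ ^ ℓ * (b:ℝ)^ℓ * (2 * (k:ℝ) * Dr * (s:ℝ)^ℓ)
          ≤ (a':ℝ) * θ ^ ℓ * (B.card:ℝ)^ℓ * (2 * (k:ℝ) * Dr * (s:ℝ)^ℓ) := by
        apply mul_le_mul_of_nonneg_right _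
          (mul_nonneg (mul_nonneg (mul_nonneg (by norm_num) (Nat.cast_nonneg k)) hDrpos.le)
            hsrpos.le)
        exact mul_le_mul_of_nonneg_left hb2 (mul_nonneg ha'R.le hθℓpos.le)
      have hcast : (((B.card ^ ℓ : ℕ) : ℝ)) = ((B.card : ℝ))^ℓ := by push_cast; rfl
      rw [hcast]
      push_cast
      have hX : (0:ℝ) ≤ Dr * (s:ℝ)^ℓ * (k:ℝ) * (a':ℝ) * θ ^ ℓ * (B.card:ℝ)^ℓ := by
        have c1 : (0:ℝ) ≤ Dr * (s:ℝ)^ℓ * (k:ℝ) * (a':ℝ) :=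
          mul_nonneg (mul_nonneg (mul_nonneg hDrpos.le hsrpos.le) (Nat.cast_nonneg k)) ha'R.le
        exact mul_nonneg (mul_nonneg c1 hθℓpos.le) (pow_nonneg hBc.le ℓ)
      nlinarith [h1, h2, h3, hX]
    obtain ⟨f, hf, i, hi, hge⟩ := exists_ge_avg _ _ hpiFne hrangene _ _ havg
    have hi' := Finset.mem_range.mp hi
    have hAcard : ((A f i).card : ℝ) ≤ (a':ℝ) := by
      have h4 : (A f i).card ≤ a' :=
        le_trans (Finset.card_filter_le _ _) (le_of_eq (hWcard i hi'))
      exact_mod_cast h4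
    have hBadnn : (0:ℝ) ≤ (Bad f i : ℝ) := Nat.cast_nonneg _
    have hpen : (0:ℝ) ≤ (a':ℝ) * θ ^ ℓ * (b:ℝ)^ℓ * (Bad f i : ℝ) :=
      mul_nonneg (mul_nonneg (mul_nonneg ha'R.le hθℓpos.le) hbrpos.le) hBadnn
    refine ⟨p + i * a', by omega, hjle i hi', A f i, hmemA f i, ?_, ?_⟩
    · -- cardinality bound
      nlinarith [hge, hpen, hDrpos, hsrpos, mul_pos hDrpos hsrpos, hθℓpos, ha'R]
    · -- bad bound
      show ((Bad f i : ℕ) : ℝ) ≤ 4 * ((2 * (k:ℝ)) / ((k:ℝ) - 1)) ^ ℓ * (a'.choose Δminus) *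
        ((s : ℝ) / b) ^ ℓ
      have hXpos : (0:ℝ) < (a':ℝ) * θ ^ ℓ * (b:ℝ)^ℓ :=
        mul_pos (mul_pos ha'R hθℓpos) hbrpos
      rw [← mul_le_mul_iff_of_pos_right hXpos]
      have hkne : (k:ℝ) - 1 ≠ 0 := by intro h; nlinarith
      have hbne : (b:ℝ) ≠ 0 := ne_of_gt hbR
      have hkne2 : (2:ℝ) * (k:ℝ) ≠ 0 := by positivity
      have hRX : 4 * ((2 * (k:ℝ)) / ((k:ℝ) - 1)) ^ ℓ * ((a'.choose Δminus : ℕ) : ℝ) *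
            ((s : ℝ) / b) ^ ℓ * ((a':ℝ) * θ ^ ℓ * (b:ℝ)^ℓ)
          = 4 * Dr * (s:ℝ)^ℓ * (a':ℝ) := by
        rw [hθdef, hDrdef, div_pow, div_pow, div_pow]
        field_simp
      rw [hRX]
      have hAc4 : 4 * Dr * (s:ℝ)^ℓ * ((A f i).card : ℝ) ≤ 4 * Dr * (s:ℝ)^ℓ * (a':ℝ) :=
        mul_le_mul_of_nonneg_left hAcard
          (mul_nonneg (mul_nonneg (by norm_num) hDrpos.le) hsrpos.le)
      have h0 : (0:ℝ) ≤ Dr * (s:ℝ)^ℓ * (a':ℝ) * θ ^ ℓ :=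
        mul_nonneg (mul_nonneg (mul_nonneg hDrpos.le hsrpos.le) ha'R.le) hθℓpos.le
      linarith [hge, hAc4, h0]
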